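/- For every n ∈ ℕ, the set ℓ∞ \ c is (n, 𝔠)-spaceable in ℓ∞: given any n-dimensional subspace Z of ℓ∞ with Z ∩ c = {0}, there exists a closed subspace F of ℓ∞ of dimension 𝔠 with Z ⊆ F and F ∩ c = {0}. -/
import Mathlib

open Filter Topology

/-- The space `ℓ∞` of bounded real sequences with the sup norm. -/
noncomputable abbrev EllInfty : Type := lp (fun _ : ℕ => ℝ) ⊤

/-- `c`, the subspace of `ℓ∞` of convergent sequences. -/
noncomputable def cConv : Submodule ℝ EllInfty where
  carrier := {x | ∃ l : ℝ, Tendsto (fun n => x n) atTop (𝓝 l)}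
  add_mem' := by
    rintro x y ⟨l, hl⟩ ⟨m, hm⟩
    exact ⟨l + m, by simpa using hl.add hm⟩
  zero_mem' := ⟨0, by simp⟩
  smul_mem' := by
    rintro c x ⟨l, hl⟩
    exact ⟨c * l, by simpa using hl.const_mul c⟩

namespace Stmt9Aux

/-- a pairing bijection -/
def pairEq : ℕ × ℕ ≃ ℕ := Denumerable.eqv (ℕ × ℕ)

variable (g : ℕ → ℕ)

open scoped Classical in
/-- the oscillating embedding, at the level of raw functions -/
noncomputable def uf (x : ℕ → ℝ) (m : ℕ) : ℝ :=
  if h : ∃ k, g k = m then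
    (-1 : ℝ) ^ ((pairEq.symm h.choose).2) * x ((pairEq.symm h.choose).1)
  else 0

lemma uf_apply (hg : Function.Injective g) (x : ℕ → ℝ) (k : ℕ) :
    uf g x (g k) = (-1 : ℝ) ^ ((pairEq.symm k).2) * x ((pairEq.symm k).1) := by
  have h : ∃ k', g k' = g k := ⟨k, rfl⟩
  have hk : h.choose = k := hg h.choose_spec
  rw [uf, dif_pos h, hk]

lemma uf_add (x y : ℕ → ℝ) (m : ℕ) : uf g (x + y) m = uf g x m + uf g y m := by
  unfold uf; split
  · simp [mul_add]
  · simp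

lemma uf_smul (c : ℝ) (x : ℕ → ℝ) (m : ℕ) : uf g (c • x) m = c * uf g x m := by
  unfold uf; split
  · simp; ring
  · simp

lemma uf_norm_le (x : EllInfty) (m : ℕ) : ‖uf g (⇑x) m‖ ≤ ‖x‖ := by
  unfold uf; split
  · rw [norm_mul, norm_pow, norm_neg, norm_one, one_pow, one_mul]
    exact lp.norm_apply_le_norm ENNReal.top_ne_zero x _
  · simp only [norm_zero]; exact norm_nonneg x

lemma uf_mem (x : EllInfty) : Memℓp (uf g ⇑x) ⊤ := by
  apply memℓp_infty
  refine ⟨‖x‖, ?_⟩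
  rintro r ⟨m, rfl⟩
  exact uf_norm_le g x m

/-- the oscillating embedding as a linear map on `ℓ∞` -/
noncomputable def U : EllInfty →ₗ[ℝ] EllInfty where
  toFun x := ⟨uf g ⇑x, uf_mem g x⟩
  map_add' x y := by
    apply lp.ext
    funext m
    have : ⇑(x + y) = ⇑x + ⇑y := lp.coeFn_add x y
    show uf g (⇑(x + y)) m = uf g ⇑x m + uf g ⇑y m
    rw [this, uf_add]
  map_smul' c x := by
    apply lp.ext
    funext m
    have : ⇑(c • x) = c • ⇑x := lp.coeFn_smul c x
    show uf g (⇑(c • x)) m = c * uf g ⇑x m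
    rw [this, uf_smul]

lemma U_coe (x : EllInfty) (m : ℕ) : (U g x) m = uf g ⇑x m := rfl

lemma U_isometry (hg : Function.Injective g) : Isometry (U g) := by
  apply AddMonoidHomClass.isometry_of_norm
  intro x
  apply le_antisymm
  · exact lp.norm_le_of_forall_le (norm_nonneg x) fun m => uf_norm_le g x m
  · refine lp.norm_le_of_forall_le (norm_nonneg _) fun i => ?_
    have h1 : (U g x) (g (pairEq (i, 0))) = x i := by
      rw [U_coe, uf_apply g hg, Equiv.symm_apply_apply]
      simp
    calc ‖x i‖ = ‖(U g x) (g (pairEq (i, 0)))‖ := by rw [h1]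
    _ ≤ ‖U g x‖ := lp.norm_apply_le_norm ENNReal.top_ne_zero _ _

lemma U_zero_of_tendsto (hg : Function.Injective g) (x : EllInfty) (L : ℝ)
    (h : Tendsto (fun k => (U g x) (g k)) atTop (𝓝 L)) : x = 0 := by
  have key : ∀ i : ℕ, x i = 0 := by
    intro i
    have hs : Function.Injective (fun j : ℕ => pairEq (i, j)) := by
      intro a b hab
      simpa using pairEq.injective hab
    have hst : Tendsto (fun j : ℕ => pairEq (i, j)) atTop atTop :=
      hs.nat_tendsto_atTop
    have hosc : Tendsto (fun j : ℕ => (-1 : ℝ) ^ j * x i) atTop (𝓝 L) := by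
      have := h.comp hst
      refine this.congr fun j => ?_
      show (U g x) (g (pairEq (i, j))) = _
      rw [U_coe, uf_apply g hg, Equiv.symm_apply_apply]
    have h2 : StrictMono (fun j : ℕ => 2 * j) := fun a b hab => by dsimp only; omega
    have h3 : StrictMono (fun j : ℕ => 2 * j + 1) := fun a b hab => by dsimp only; omega
    have he : Tendsto (fun j : ℕ => (-1 : ℝ) ^ (2 * j) * x i) atTop (𝓝 L) :=
      hosc.comp h2.tendsto_atTop
    have ho : Tendsto (fun j : ℕ => (-1 : ℝ) ^ (2 * j + 1) * x i) atTop (𝓝 L) :=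
      hosc.comp h3.tendsto_atTop
    have he' : Tendsto (fun _ : ℕ => x i) atTop (𝓝 L) := by
      refine he.congr fun j => ?_
      rw [pow_mul, neg_one_sq, one_pow, one_mul]
    have ho' : Tendsto (fun _ : ℕ => -(x i)) atTop (𝓝 L) := by
      refine ho.congr fun j => ?_
      rw [pow_succ, pow_mul, neg_one_sq, one_pow, one_mul]
      ring
    have e1 : x i = L := tendsto_nhds_unique tendsto_const_nhds he'
    have e2 : -(x i) = L := tendsto_nhds_unique tendsto_const_nhds ho'
    linarith
  apply lp.ext
  funext m
  simpa using key m

lemma exists_subseq (m : ℕ) (v : Fin m → EllInfty) :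
    ∃ g : ℕ → ℕ, StrictMono g ∧ ∀ i, ∃ l, Tendsto (fun k => v i (g k)) atTop (𝓝 l) := by
  induction m with
  | zero => exact ⟨id, strictMono_id, fun i => i.elim0⟩
  | succ m ih =>
    obtain ⟨g₀, hg₀, hc⟩ := ih (fun i => v i.castSucc)
    have hbd : ∀ k, v (Fin.last m) (g₀ k) ∈ Metric.closedBall (0:ℝ) ‖v (Fin.last m)‖ := by
      intro k
      simp only [Metric.mem_closedBall, dist_zero_right]
      exact lp.norm_apply_le_norm ENNReal.top_ne_zero _ _
    obtain ⟨a, -, φ, hφ, ha⟩ := tendsto_subseq_of_bounded Metric.isBounded_closedBall hbd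
    refine ⟨g₀ ∘ φ, hg₀.comp hφ, fun i => ?_⟩
    refine Fin.lastCases ?_ (fun j => ?_) i
    · exact ⟨a, ha⟩
    · obtain ⟨l, hl⟩ := hc j
      exact ⟨l, hl.comp hφ.tendsto_atTop⟩

/-- the subspace of sequences converging along `g` -/
noncomputable def cAlong (g : ℕ → ℕ) : Submodule ℝ EllInfty where
  carrier := {x | ∃ l : ℝ, Tendsto (fun k => x (g k)) atTop (𝓝 l)}
  add_mem' := by
    rintro x y ⟨l, hl⟩ ⟨m, hm⟩
    exact ⟨l + m, by simpa using hl.add hm⟩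
  zero_mem' := ⟨0, by simp⟩
  smul_mem' := by
    rintro c x ⟨l, hl⟩
    exact ⟨c * l, by simpa using hl.const_mul c⟩

/-- the sum of a finite-dimensional subspace and a closed subspace is closed -/
lemma isClosed_sup {E : Type*} [NormedAddCommGroup E] [NormedSpace ℝ E]
    (Z W : Submodule ℝ E) [FiniteDimensional ℝ Z] (hW : IsClosed (W : Set E)) :
    IsClosed ((Z ⊔ W : Submodule ℝ E) : Set E) := by
  haveI := hW
  have hcont : Continuous W.mkQ := by
    apply AddMonoidHomClass.continuous_of_bound W.mkQ 1
    intro x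
    rw [one_mul]
    exact Submodule.Quotient.norm_mk_le W x
  have hclosed : IsClosed ((Z.map W.mkQ : Submodule ℝ (E ⧸ W)) : Set (E ⧸ W)) :=
    Submodule.closed_of_finiteDimensional _
  have heq : (Z ⊔ W : Submodule ℝ E) = (Z.map W.mkQ).comap W.mkQ := by
    rw [Submodule.comap_map_mkQ, sup_comm]
  rw [heq]
  exact hclosed.preimage hcont

/-- the geometric sequences, as elements of `ℓ∞` -/
noncomputable def geom (t : Set.Ioo (0:ℝ) 1) : EllInfty :=
  ⟨fun k => (t : ℝ) ^ k, by
    apply memℓp_infty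
    refine ⟨1, ?_⟩
    rintro r ⟨k, rfl⟩
    have h0 : (0:ℝ) < t := t.2.1
    have h1 : (t:ℝ) ≤ 1 := le_of_lt t.2.2
    simp only [Real.norm_eq_abs]
    rw [abs_of_nonneg (pow_nonneg h0.le k)]
    exact pow_le_one₀ h0.le h1⟩

/-- the coercion from `ℓ∞` to functions, as a linear map -/
noncomputable def coeLM : EllInfty →ₗ[ℝ] (ℕ → ℝ) where
  toFun x := ⇑x
  map_add' := lp.coeFn_add
  map_smul' := lp.coeFn_smul

lemma geom_li : LinearIndependent ℝ geom := by
  have h1 : LinearIndependent ℝ (fun f : Multiplicative ℕ →* ℝ => (f : Multiplicative ℕ → ℝ)) :=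
    linearIndependent_monoidHom (Multiplicative ℕ) ℝ
  have hinj : Function.Injective (fun t : Set.Ioo (0:ℝ) 1 => powersHom ℝ (t:ℝ)) :=
    fun s t hst => Subtype.ext ((powersHom ℝ).injective hst)
  have h2 := h1.comp _ hinj
  let e : (Multiplicative ℕ → ℝ) ≃ₗ[ℝ] (ℕ → ℝ) :=
    LinearEquiv.funCongrLeft ℝ ℝ (Multiplicative.ofAdd : ℕ ≃ Multiplicative ℕ)
  have h3 := h2.map' e.toLinearMap e.ker
  apply LinearIndependent.of_comp coeLM
  have : coeLM ∘ geom = fun t : Set.Ioo (0:ℝ) 1 => e ⇑(powersHom ℝ (t:ℝ)) := by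
    funext t k
    simp [coeLM, geom, e, LinearEquiv.funCongrLeft]
  rw [this]
  exact h3

end Stmt9Aux

open Cardinal in
private theorem mk_nat_arrow_real : (Cardinal.mk (ℕ → ℝ)) = Cardinal.continuum := by
  rw [← Cardinal.power_def, Cardinal.mk_real, Cardinal.mk_nat, Cardinal.continuum_power_aleph0]

set_option maxHeartbeats 1000000 in
set_option synthInstance.maxHeartbeats 1000000 in
/-- `ℓ∞ \ c` is `(n, 𝔠)`-spaceable for every `n ∈ ℕ`. -/
theorem stmt9 (n : ℕ) (Z : Submodule ℝ EllInfty) (hZdim : Module.rank ℝ Z = n)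
    (hZ : Z ⊓ cConv = ⊥) :
    ∃ F : Submodule ℝ EllInfty, IsClosed (F : Set EllInfty) ∧
      Module.rank ℝ F = Cardinal.continuum ∧ Z ≤ F ∧ F ⊓ cConv = ⊥ := by
  classical
  haveI hfin : FiniteDimensional ℝ Z := Module.finite_of_rank_eq_nat hZdim
  set d := Module.finrank ℝ Z with hd
  let b := Module.finBasis ℝ Z
  let v : Fin d → EllInfty := fun i => (b i : EllInfty)
  obtain ⟨g, hgmono, hconv⟩ := Stmt9Aux.exists_subseq d v
  have hginj := hgmono.injective
  have hspan : Submodule.span ℝ (Set.range v) = Z := by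
    have h := congrArg (Submodule.map Z.subtype) b.span_eq
    rwa [Submodule.map_span, Submodule.map_top, Submodule.range_subtype, ← Set.range_comp] at h
  have hZle : Z ≤ Stmt9Aux.cAlong g := by
    rw [← hspan]
    apply Submodule.span_le.2
    rintro _ ⟨i, rfl⟩
    exact hconv i
  set W := LinearMap.range (Stmt9Aux.U g) with hWdef
  have hUiso := Stmt9Aux.U_isometry g hginj
  have hWclosed : IsClosed (W : Set EllInfty) := by
    have := hUiso.isClosedEmbedding.isClosed_range
    simpa [hWdef, LinearMap.coe_range] using this
  refine ⟨Z ⊔ W, Stmt9Aux.isClosed_sup Z W hWclosed, ?_, le_sup_left, ?_⟩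
  · -- the rank computation
    apply le_antisymm
    · have h1 : Module.rank ℝ ↥(Z ⊔ W) ≤ Module.rank ℝ EllInfty := Submodule.rank_le _
      have h2 : Module.rank ℝ EllInfty ≤ Cardinal.mk EllInfty := rank_le_card ℝ EllInfty
      have h3 : Cardinal.mk EllInfty ≤ Cardinal.mk (ℕ → ℝ) :=
        Cardinal.mk_le_of_injective (f := fun x : EllInfty => (x : ℕ → ℝ))
          (fun x y hxy => lp.ext hxy)
      have h4 := mk_nat_arrow_real
      exact h4 ▸ (h1.trans (h2.trans h3))
    · have hmem : ∀ t, (Stmt9Aux.U g) (Stmt9Aux.geom t) ∈ Z ⊔ W := fun t =>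
        Submodule.mem_sup_right (LinearMap.mem_range_self _ _)
      have hUinj : Function.Injective (Stmt9Aux.U g) := hUiso.injective
      have li2 : LinearIndependent ℝ (fun t => (Stmt9Aux.U g) (Stmt9Aux.geom t)) :=
        Stmt9Aux.geom_li.map' (Stmt9Aux.U g) (LinearMap.ker_eq_bot.2 hUinj)
      have li3 : LinearIndependent ℝ (fun t => (⟨_, hmem t⟩ : ↥(Z ⊔ W))) :=
        LinearIndependent.of_comp (Z ⊔ W).subtype li2
      have h5 := li3.cardinal_le_rank
      rwa [Cardinal.mk_Ioo_real zero_lt_one] at h5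
  · -- trivial intersection with c
    rw [eq_bot_iff]
    rintro y hy
    rw [Submodule.mem_inf] at hy
    obtain ⟨hyF, hyc⟩ := hy
    have hyc' : ∃ l : ℝ, Tendsto (fun n => y n) atTop (𝓝 l) := hyc
    obtain ⟨l, hl⟩ := hyc'
    rw [Submodule.mem_sup] at hyF
    obtain ⟨z, hz, w, hw, hzw⟩ := hyF
    obtain ⟨x, rfl⟩ := hw
    have hlz' : ∃ lz : ℝ, Tendsto (fun k => z (g k)) atTop (𝓝 lz) := hZle hz
    obtain ⟨lz, hlz⟩ := hlz'
    have hyg : Tendsto (fun k => y (g k)) atTop (𝓝 l) := hl.comp hgmono.tendsto_atTop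
    have hx0 : x = 0 := by
      apply Stmt9Aux.U_zero_of_tendsto g hginj x (l - lz)
      have hcoord : ∀ k, (Stmt9Aux.U g x) (g k) = y (g k) - z (g k) := by
        intro k
        have h6 := congrArg (fun u : EllInfty => u (g k)) hzw
        simp only [lp.coeFn_add, Pi.add_apply] at h6
        linarith
      refine (hyg.sub hlz).congr fun k => (hcoord k).symm
    rw [hx0, map_zero, add_zero] at hzw
    subst hzw
    have h7 : z ∈ Z ⊓ cConv := ⟨hz, hyc⟩
    rw [hZ] at h7
    simpa using h7
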